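/- arXiv:math/0701936 — 2 statements merged into one kernel-verified Lean document; each statement's English description precedes it below -/
import Mathlib

section
/- Let R be an associative ring, E a right R-module, ξ_0, ..., ξ_n elements of E, and M an almost triangular matrix of size n+1 over R. Let M^τ denote the matrix with (i,j)-entry M_{n-j,n-i}. If the row vector (ξ_0, ..., ξ_n) multiplied by M^τ equals the zero row vector, then ξ_0 · det_right(M) = 0. -/
open Equiv MulOpposite

/-- The right determinant of a square matrix over a (possibly noncommutative) ring. -/
def detRight {R : Type*} [Ring R] {n : ℕ} (M : Matrix (Fin (n+1)) (Fin (n+1)) R) : R :=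
  ∑ σ : Equiv.Perm (Fin (n+1)),
    (Equiv.Perm.sign σ : ℤ) • (List.ofFn (fun k : Fin (n+1) => M (σ k.rev) k.rev)).prod

/-- A variant of `detRight` without the `rev`s. -/
def detRight' {R : Type*} [Ring R] {n : ℕ} (N : Matrix (Fin (n+1)) (Fin (n+1)) R) : R :=
  ∑ σ : Equiv.Perm (Fin (n+1)),
    (Equiv.Perm.sign σ : ℤ) • (List.ofFn (fun k : Fin (n+1) => N (σ k) k)).prod

lemma detRight_eq_detRight' {R : Type*} [Ring R] {n : ℕ}
    (M : Matrix (Fin (n+1)) (Fin (n+1)) R) :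
    detRight M = detRight' (fun i j => M i.rev j.rev) := by
  unfold detRight detRight'
  refine (Fintype.sum_equiv ((Equiv.mulRight Fin.revPerm).trans (Equiv.mulLeft Fin.revPerm))
    _ _ ?_).symm
  intro τ
  have hsign : Equiv.Perm.sign (Fin.revPerm * (τ * Fin.revPerm)) = Equiv.Perm.sign τ := by
    simp only [map_mul]
    rw [mul_comm ((Equiv.Perm.sign) Fin.revPerm), mul_assoc, Int.units_mul_self, mul_one]
  simp only [Equiv.trans_apply, Equiv.coe_mulRight, Equiv.coe_mulLeft, hsign,
    Equiv.Perm.mul_apply, Fin.revPerm_apply, Fin.rev_rev]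

/-- One step of reduction: eliminating `ξ₁` does not change the right determinant. -/
lemma det_step {R : Type*} [Ring R] {n : ℕ} (N : Matrix (Fin (n+2)) (Fin (n+2)) R)
    (hup : ∀ i j : Fin (n+2), (i:ℕ)+1 < (j:ℕ) → N i j = 0)
    (hsup : ∀ i j : Fin (n+2), (j:ℕ) = (i:ℕ)+1 → N i j = -1) :
    detRight' N = detRight'
      (fun j i => (Fin.cases (N j.succ 0 + N 0 0 * N j.succ 1)
        (fun i' => N j.succ i'.succ.succ) i : R)) := by
  classical
  set N' : Matrix (Fin (n+1)) (Fin (n+1)) R :=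
    fun j i => (Fin.cases (N j.succ 0 + N 0 0 * N j.succ 1)
      (fun i' => N j.succ i'.succ.succ) i : R) with hN'
  set f : Equiv.Perm (Fin (n+2)) → R :=
    fun σ => (Equiv.Perm.sign σ : ℤ) • (List.ofFn (fun k : Fin (n+2) => N (σ k) k)).prod
    with hf
  set g : Equiv.Perm (Fin (n+1)) × Bool → Equiv.Perm (Fin (n+2)) :=
    fun p => Equiv.Perm.decomposeFin.symm (0, p.1) * (if p.2 then Equiv.swap 0 1 else 1)
    with hg
  have hg0 : ∀ e : Equiv.Perm (Fin (n+1)), ∀ k, g (e, false) k =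
      (Fin.cases 0 (fun x => (e x).succ) k : Fin (n+2)) := by
    intro e k
    induction k using Fin.cases with
    | zero => simp [hg, Equiv.Perm.decomposeFin_symm_apply_zero]
    | succ x => simp [hg, Equiv.Perm.decomposeFin_symm_apply_succ]
  have hswap2 : ∀ x : Fin n, Equiv.swap (0 : Fin (n+2)) 1 x.succ.succ = x.succ.succ := by
    intro x
    refine Equiv.swap_apply_of_ne_of_ne (Fin.succ_ne_zero _) ?_
    rw [← Fin.succ_zero_eq_one]
    exact fun hc => Fin.succ_ne_zero x (Fin.succ_injective _ hc)
  -- injectivity of g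
  have hinj : ∀ p q : Equiv.Perm (Fin (n+1)) × Bool, g p = g q → p = q := by
    rintro ⟨e, b⟩ ⟨e', b'⟩ hpq
    have h1 : ∀ (e : Equiv.Perm (Fin (n+1))) (b : Bool),
        g (e, b) 1 = if b then 0 else (e 0).succ := by
      intro e b
      cases b with
      | false =>
        have h1e := hg0 e (0 : Fin (n+1)).succ
        rw [Fin.cases_succ, Fin.succ_zero_eq_one] at h1e
        simpa using h1e
      | true =>
        simp only [hg, if_true, Equiv.Perm.mul_apply, Equiv.swap_apply_right]
        simp [Equiv.Perm.decomposeFin_symm_apply_zero]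
    have hv : (if b then (0 : Fin (n+2)) else (e 0).succ)
        = (if b' then 0 else (e' 0).succ) := by
      rw [← h1 e b, ← h1 e' b', hpq]
    have hb : b = b' := by
      cases b <;> cases b' <;> simp only [if_true, if_false, Bool.false_eq_true] at hv ⊢ <;>
        first
          | rfl
          | exact absurd hv (Fin.succ_ne_zero _)
          | exact absurd hv.symm (Fin.succ_ne_zero _)
    subst hb
    have he : e = e' := by
      have hmul : Equiv.Perm.decomposeFin.symm ((0 : Fin (n+2)), e)
          = Equiv.Perm.decomposeFin.symm ((0 : Fin (n+2)), e') := by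
        cases b with
        | false => simpa [hg] using hpq
        | true =>
          simp only [hg, if_true] at hpq
          exact mul_right_cancel hpq
      have := Equiv.Perm.decomposeFin.symm.injective hmul
      exact (Prod.mk.injEq _ _ _ _).mp this |>.2
    simp [he]
  -- terms outside the image vanish
  have himage : ∀ σ : Equiv.Perm (Fin (n+2)),
      σ ∉ Finset.image g Finset.univ → f σ = 0 := by
    intro σ hσ
    have hmem : ∀ p, g p = σ → False := by
      intro p hp
      exact hσ (Finset.mem_image.mpr ⟨p, Finset.mem_univ _, hp⟩)
    have h0 : σ 0 ≠ 0 := by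
      intro hc
      have hd := Equiv.Perm.decomposeFin.symm_apply_apply σ
      set pe := Equiv.Perm.decomposeFin σ with hpe
      have hfst : pe.1 = 0 := by
        have : Equiv.Perm.decomposeFin.symm pe 0 = pe.1 :=
          Equiv.Perm.decomposeFin_symm_apply_zero _ _
        rw [hd] at this
        rw [← this, hc]
      exact hmem (pe.2, false) (by
        simp only [hg, if_neg Bool.false_ne_true, mul_one]
        rw [show ((0 : Fin (n+2)), pe.2) = pe from Prod.ext hfst.symm rfl]
        exact hd)
    have h1 : σ 1 ≠ 0 := by
      intro hc
      have hd := Equiv.Perm.decomposeFin.symm_apply_apply (σ * Equiv.swap 0 1)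
      set pe := Equiv.Perm.decomposeFin (σ * Equiv.swap 0 1) with hpe
      have hfst : pe.1 = 0 := by
        have : Equiv.Perm.decomposeFin.symm pe 0 = pe.1 :=
          Equiv.Perm.decomposeFin_symm_apply_zero _ _
        rw [hd] at this
        rw [← this]
        simp [Equiv.Perm.mul_apply, hc]
      refine hmem (pe.2, true) ?_
      simp only [hg, if_true]
      rw [show ((0 : Fin (n+2)), pe.2) = pe from Prod.ext hfst.symm rfl, hd]
      rw [mul_assoc, Equiv.swap_mul_self, mul_one]
    -- so σ⁻¹ 0 has index ≥ 2 and the product contains N 0 (σ⁻¹ 0) = 0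
    set p := σ⁻¹ 0 with hp
    have hσp : σ p = 0 := by simp [hp]
    have hp0 : p ≠ 0 := fun hc => h0 (by rw [hc] at hσp; exact hσp)
    have hp1 : p ≠ 1 := fun hc => h1 (by rw [hc] at hσp; exact hσp)
    have hpval : (0:ℕ) + 1 < (p : ℕ) := by
      have v0 : (p : ℕ) ≠ 0 := fun hc => hp0 (Fin.ext (by simpa using hc))
      have v1 : (p : ℕ) ≠ 1 := fun hc => hp1 (Fin.ext (by simpa using hc))
      omega
    have hzero : N (σ p) p = 0 := by
      rw [hσp]; exact hup 0 p hpval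
    have hzp : (List.ofFn (fun k : Fin (n+2) => N (σ k) k)).prod = 0 := by
      refine List.prod_eq_zero ?_
      rw [List.mem_ofFn]
      exact ⟨p, hzero⟩
    show (Equiv.Perm.sign σ : ℤ) • (List.ofFn (fun k : Fin (n+2) => N (σ k) k)).prod = 0
    rw [hzp, smul_zero]
  -- reduce the sum to the image of g
  have hsum : detRight' N = ∑ p : Equiv.Perm (Fin (n+1)) × Bool, f (g p) := by
    have h1 : detRight' N = ∑ σ ∈ Finset.image g Finset.univ, f σ := by
      refine (Finset.sum_subset (Finset.subset_univ _) ?_).symm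
      intro σ _ hσ
      exact himage σ hσ
    rw [h1, Finset.sum_image (fun p _ q _ hpq => hinj p q hpq)]
  rw [hsum, Fintype.sum_prod_type, detRight']
  refine Finset.sum_congr rfl ?_
  intro e _
  rw [Fintype.sum_bool]
  -- compute the two terms
  have hsign0 : (Equiv.Perm.sign (g (e, false)) : ℤ) = (Equiv.Perm.sign e : ℤ) := by
    simp [hg, Equiv.Perm.decomposeFin.symm_sign]
  have hsign1 : (Equiv.Perm.sign (g (e, true)) : ℤ) = -(Equiv.Perm.sign e : ℤ) := by
    simp only [hg, if_true, map_mul]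
    rw [Equiv.Perm.decomposeFin.symm_sign, Equiv.Perm.sign_swap (by
      rw [← Fin.succ_zero_eq_one]; exact (Fin.succ_ne_zero _).symm)]
    simp
  set rest : R := (List.ofFn (fun k : Fin n => N (e k.succ).succ k.succ.succ)).prod
    with hrest
  have hprod0 : (List.ofFn (fun k : Fin (n+2) => N (g (e, false) k) k)).prod
      = N 0 0 * (N (e 0).succ 1 * rest) := by
    have hfun : (fun k : Fin (n+2) => N (g (e, false) k) k)
        = fun k => N (Fin.cases 0 (fun x => (e x).succ) k) k := by
      funext k; rw [hg0]
    rw [hfun, List.ofFn_succ, List.ofFn_succ]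
    simp only [Fin.cases_zero, Fin.cases_succ, List.prod_cons, Fin.succ_zero_eq_one]
    rfl
  have hprod1 : (List.ofFn (fun k : Fin (n+2) => N (g (e, true) k) k)).prod
      = N (e 0).succ 0 * ((-1) * rest) := by
    have hfun : (fun k : Fin (n+2) => N (g (e, true) k) k)
        = fun k => N (Fin.cases ((e 0).succ)
            (fun j => Fin.cases 0 (fun x => (e x.succ).succ) j) k) k := by
      funext k
      induction k using Fin.cases with
      | zero =>
        have e0 : g (e, true) (0 : Fin (n+2)) = (e 0).succ := by
          simp only [hg, if_true, Equiv.Perm.mul_apply, Equiv.swap_apply_left]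
          have := hg0 e ((0:Fin (n+1)).succ)
          simp only [hg] at this
          simpa using this
        rw [e0, Fin.cases_zero]
      | succ j =>
        rw [Fin.cases_succ]
        induction j using Fin.cases with
        | zero =>
          have e1 : g (e, true) ((0 : Fin (n+1)).succ) = 0 := by
            simp only [hg, if_true, Equiv.Perm.mul_apply, Fin.succ_zero_eq_one,
              Equiv.swap_apply_right]
            have := hg0 e 0
            simp only [hg] at this
            simpa using this
          rw [e1, Fin.cases_zero]
        | succ x =>
          have hk : g (e, true) x.succ.succ = (e x.succ).succ := by
            simp only [hg, if_true, Equiv.Perm.mul_apply, hswap2 x]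
            have := hg0 e x.succ.succ
            simp only [hg] at this
            simpa using this
          rw [hk, Fin.cases_succ]
    rw [hfun, List.ofFn_succ, List.ofFn_succ]
    simp only [Fin.cases_zero, Fin.cases_succ, List.prod_cons]
    rw [hsup 0 ((0 : Fin (n+1)).succ) (by simp)]
  simp only [hf]
  rw [hprod0, hprod1, hsign0, hsign1]
  have hNe : N' (e 0) 0 = N (e 0).succ 0 + N 0 0 * N (e 0).succ 1 := by
    simp [hN']
  have htail : (fun k : Fin n => N' (e k.succ) k.succ)
      = fun k => N (e k.succ).succ k.succ.succ := by
    funext k; simp [hN']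
  rw [List.ofFn_succ, List.prod_cons, hNe, htail]
  rw [neg_one_mul, mul_neg, neg_smul, smul_neg, neg_neg, ← smul_add]
  congr 1
  rw [add_mul, mul_assoc]

/-- The key lemma, in un-reversed coordinates. -/
lemma key {R : Type*} [Ring R] {n : ℕ} {E : Type*} [AddCommGroup E] [Module Rᵐᵒᵖ E]
    (N : Matrix (Fin (n+1)) (Fin (n+1)) R)
    (hup : ∀ i j : Fin (n+1), (i:ℕ)+1 < (j:ℕ) → N i j = 0)
    (hsup : ∀ i j : Fin (n+1), (j:ℕ) = (i:ℕ)+1 → N i j = -1)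
    (ξ : Fin (n+1) → E)
    (h : ∀ j : Fin (n+1), ∑ i, MulOpposite.op (N j i) • ξ i = 0) :
    MulOpposite.op (detRight' N) • ξ 0 = 0 := by
  induction n with
  | zero =>
    have h0 := h 0
    rw [Fin.sum_univ_one] at h0
    have : detRight' N = N 0 0 := by
      rw [detRight']
      rw [Fintype.sum_subsingleton _ (1 : Equiv.Perm (Fin 1))]
      simp [List.ofFn_succ]
    rw [this]
    exact h0
  | succ m ih =>
    -- ξ 1 in terms of ξ 0
    have hξ1 : ξ 1 = MulOpposite.op (N 0 0) • ξ 0 := by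
      have h0 := h 0
      rw [Fin.sum_univ_succ, Fin.sum_univ_succ] at h0
      have htail : ∀ i : Fin m, MulOpposite.op (N 0 i.succ.succ) • ξ i.succ.succ = 0 := by
        intro i
        have : N 0 i.succ.succ = 0 := hup 0 i.succ.succ (by simp)
        simp [this]
      rw [Finset.sum_congr rfl (fun i _ => htail i)] at h0
      have h01 : N 0 (0:Fin (m+1)).succ = -1 := hsup 0 _ (by simp)
      rw [h01] at h0
      simp only [Finset.sum_const_zero, add_zero, op_neg, op_one, neg_smul, one_smul] at h0
      rw [Fin.succ_zero_eq_one] at h0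
      have := add_eq_zero_iff_eq_neg.mp h0
      rw [this]; abel
    set N' : Matrix (Fin (m+1)) (Fin (m+1)) R :=
      fun j i => (Fin.cases (N j.succ 0 + N 0 0 * N j.succ 1)
        (fun i' => N j.succ i'.succ.succ) i : R) with hN'
    set ζ : Fin (m+1) → E := fun i => Fin.cases (ξ 0) (fun i' => ξ i'.succ.succ) i with hζ
    have hup' : ∀ i j : Fin (m+1), (i:ℕ)+1 < (j:ℕ) → N' i j = 0 := by
      intro i j hij
      induction j using Fin.cases with
      | zero => simp at hij
      | succ j' =>
        simp only [hN', Fin.cases_succ]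
        exact hup _ _ (by simp [Fin.val_succ] at hij ⊢; omega)
    have hsup' : ∀ i j : Fin (m+1), (j:ℕ) = (i:ℕ)+1 → N' i j = -1 := by
      intro i j hij
      induction j using Fin.cases with
      | zero => simp at hij
      | succ j' =>
        simp only [hN', Fin.cases_succ]
        exact hsup _ _ (by simp [Fin.val_succ] at hij ⊢; omega)
    have h' : ∀ j : Fin (m+1), ∑ i, MulOpposite.op (N' j i) • ζ i = 0 := by
      intro j
      have hj := h j.succ
      rw [Fin.sum_univ_succ, Fin.sum_univ_succ] at hj
      rw [Fin.sum_univ_succ]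
      simp only [hN', hζ, Fin.cases_zero, Fin.cases_succ]
      rw [op_add, add_smul, op_mul, mul_smul, ← hξ1]
      rw [add_assoc]
      rw [Fin.succ_zero_eq_one] at hj
      exact hj
    have hres := ih N' hup' hsup' ζ h'
    have hζ0 : ζ 0 = ξ 0 := by simp [hζ]
    rw [hζ0] at hres
    rw [det_step N hup hsup]
    exact hres

/-- Let `E` be a right `R`-module (a module over `Rᵐᵒᵖ`), `ξ_0, …, ξ_n ∈ E`, and `M` an
almost triangular matrix over `R`. If `(ξ_0,…,ξ_n) M^τ = 0`, where
`(M^τ)_{ij} = M_{n-j,n-i}`, then `ξ_0 · det_right(M) = 0`. -/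
theorem stmt5 {R : Type*} [Ring R] {n : ℕ} {E : Type*} [AddCommGroup E] [Module Rᵐᵒᵖ E]
    (M : Matrix (Fin (n+1)) (Fin (n+1)) R)
    (hlow : ∀ i j : Fin (n+1), (j : ℕ) + 1 < (i : ℕ) → M i j = 0)
    (hsub : ∀ i j : Fin (n+1), (i : ℕ) = (j : ℕ) + 1 → M i j = -1)
    (ξ : Fin (n+1) → E)
    (h : ∀ j : Fin (n+1), ∑ i, MulOpposite.op (M (Fin.rev j) (Fin.rev i)) • ξ i = 0) :
    MulOpposite.op (detRight M) • ξ 0 = 0 := by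
  set N : Matrix (Fin (n+1)) (Fin (n+1)) R := fun i j => M i.rev j.rev with hN
  have hup : ∀ i j : Fin (n+1), (i:ℕ)+1 < (j:ℕ) → N i j = 0 := by
    intro i j hij
    refine hlow i.rev j.rev ?_
    have hi := i.isLt; have hj := j.isLt
    simp [Fin.val_rev]
    omega
  have hsup : ∀ i j : Fin (n+1), (j:ℕ) = (i:ℕ)+1 → N i j = -1 := by
    intro i j hij
    refine hsub i.rev j.rev ?_
    have hi := i.isLt; have hj := j.isLt
    simp [Fin.val_rev]
    omega
  rw [detRight_eq_detRight' M]
  exact key N hup hsup ξ h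
end

section
/- An operator L = (t∂_t)^n t + Σ_{p=1}^{n+1} g_p(t∂_t)∂_t^{p-1} (with deg g_p ≤ n-p+1) satisfies L^∨ = (-1)^n L if and only if for every p, g_p(x) = (-1)^{n-p+1} g_p(-x-p) as polynomials. -/
/-- The defining relation of the Weyl algebra `ℂ[t,∂_t]`: `∂ t = t ∂ + 1`. -/
def WeylRel : FreeAlgebra ℂ Bool → FreeAlgebra ℂ Bool → Prop :=
  fun x y => x = FreeAlgebra.ι ℂ true * FreeAlgebra.ι ℂ false ∧
    y = FreeAlgebra.ι ℂ false * FreeAlgebra.ι ℂ true + 1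

/-- The Weyl algebra `ℂ[t,∂_t]` with `∂_t t - t ∂_t = 1`. -/
abbrev Weyl := RingQuot WeylRel

/-- The generator `∂_t` of the Weyl algebra. -/
def pa : Weyl := RingQuot.mkAlgHom ℂ WeylRel (FreeAlgebra.ι ℂ true)

/-- The generator `t` of the Weyl algebra. -/
def tt : Weyl := RingQuot.mkAlgHom ℂ WeylRel (FreeAlgebra.ι ℂ false)

/-- Given a complex matrix `A` with `-A` almost triangular, the matrix `Ã` of
differential operators with `Ã_{ij} = a_{ij} ∂_t^{j-i+1}` (and `Ã_{ij} = 0` for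
`i > j+1`, where `a_{ij} = 0` anyway). -/
noncomputable def Atilde {n : ℕ} (A : Matrix (Fin (n+1)) (Fin (n+1)) ℂ) :
    Matrix (Fin (n+1)) (Fin (n+1)) Weyl :=
  fun i j =>
    if (i : ℕ) ≤ (j : ℕ) + 1 then
      algebraMap ℂ Weyl (A i j) * pa ^ ((j : ℕ) + 1 - (i : ℕ))
    else 0

/-- The matrix `t ∂_t - Ã`. -/
noncomputable def tdMinus {n : ℕ} (A : Matrix (Fin (n+1)) (Fin (n+1)) ℂ) :
    Matrix (Fin (n+1)) (Fin (n+1)) Weyl :=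
  fun i j => (if i = j then tt * pa else 0) - Atilde A i j

lemma weyl_comm : pa * tt = tt * pa + 1 := by
  have h := RingQuot.mkAlgHom_rel ℂ (s := WeylRel)
    (x := FreeAlgebra.ι ℂ true * FreeAlgebra.ι ℂ false)
    (y := FreeAlgebra.ι ℂ false * FreeAlgebra.ι ℂ true + 1) ⟨rfl, rfl⟩
  simpa [pa, tt, map_mul, map_add, map_one] using h


open Polynomial

lemma pa_hpow (k : ℕ) : pa * (tt*pa)^k = (tt*pa+1)^k * pa := by
  induction k with
  | zero => simp
  | succ k ih =>
    calc pa * (tt*pa)^(k+1) = (pa * (tt*pa)^k) * (tt*pa) := by rw [pow_succ, mul_assoc]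
    _ = (tt*pa+1)^k * (pa * (tt*pa)) := by rw [ih, mul_assoc]
    _ = (tt*pa+1)^k * ((pa * tt) * pa) := by rw [mul_assoc]
    _ = (tt*pa+1)^k * ((tt*pa+1) * pa) := by rw [weyl_comm]
    _ = (tt*pa+1)^(k+1) * pa := by rw [← mul_assoc, ← pow_succ]

lemma pa_aeval' (f : ℂ[X]) : pa * aeval (tt*pa) f = aeval (tt*pa+1) f * pa := by
  induction f using Polynomial.induction_on' with
  | add p q hp hq => simp [mul_add, add_mul, hp, hq]
  | monomial k a =>
    simp only [aeval_monomial]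
    rw [← mul_assoc, ← Algebra.commutes, mul_assoc, pa_hpow, ← mul_assoc, mul_assoc]

lemma pa_aeval (f : ℂ[X]) : pa * aeval (tt*pa) f = aeval (tt*pa) (f.comp (X+1)) * pa := by
  rw [aeval_comp]; simp [pa_aeval']

lemma papow_aeval (m : ℕ) (f : ℂ[X]) :
    pa^m * aeval (tt*pa) f = aeval (tt*pa) (f.comp (X + C (m:ℂ))) * pa^m := by
  induction m generalizing f with
  | zero => simp
  | succ m ih =>
    rw [pow_succ, mul_assoc, pa_aeval, ← mul_assoc, ih, mul_assoc, ← pow_succ,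
      comp_assoc]
    congr 3
    push_cast
    simp [add_comp]
    ring

lemma tt_h : tt * (tt*pa+1) = (tt*pa) * tt := by
  rw [mul_assoc, ← weyl_comm, ← mul_assoc]

lemma tt_hpow (k : ℕ) : tt * (tt*pa+1)^k = (tt*pa)^k * tt := by
  induction k with
  | zero => simp
  | succ k ih =>
    calc tt * (tt*pa+1)^(k+1) = (tt * (tt*pa+1)^k) * (tt*pa+1) := by
          rw [pow_succ, mul_assoc]
    _ = (tt*pa)^k * (tt * (tt*pa+1)) := by rw [ih, mul_assoc]
    _ = (tt*pa)^k * ((tt*pa) * tt) := by rw [tt_h]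
    _ = (tt*pa)^(k+1) * tt := by rw [← mul_assoc, ← pow_succ]

noncomputable def Mx : Module.End ℂ ℂ[X] := LinearMap.mulLeft ℂ (X : ℂ[X])
noncomputable def Dx : Module.End ℂ ℂ[X] := Polynomial.derivative

lemma DxMx : Dx * Mx = Mx * Dx + 1 := by
  refine LinearMap.ext fun f => ?_
  simp [Dx, Mx, Module.End.mul_apply, derivative_mul, add_comm]

noncomputable def rho : Weyl →ₐ[ℂ] Module.End ℂ ℂ[X] :=
  RingQuot.liftAlgHom ℂ ⟨FreeAlgebra.lift ℂ (fun b => if b then Dx else Mx), by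
    rintro x y ⟨rfl, rfl⟩
    simp [DxMx]⟩

lemma rho_pa : rho pa = Dx := by
  simp [rho, pa, RingQuot.liftAlgHom_mkAlgHom_apply]

lemma rho_tt : rho tt = Mx := by
  simp [rho, tt, RingQuot.liftAlgHom_mkAlgHom_apply]

lemma MxDx_pow (j : ℕ) : (Mx * Dx) (X^j : ℂ[X]) = (j : ℂ) • X^j := by
  cases j with
  | zero => simp [Mx, Dx, Module.End.mul_apply]
  | succ j =>
    simp only [Mx, Dx, Module.End.mul_apply, LinearMap.mulLeft_apply, derivative_X_pow,
      Nat.add_sub_cancel, smul_eq_C_mul]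
    push_cast
    ring

lemma MxDx_pow_pow (k j : ℕ) : ((Mx * Dx)^k) (X^j : ℂ[X]) = ((j : ℂ)^k) • X^j := by
  induction k with
  | zero => simp
  | succ k ih =>
    rw [pow_succ', Module.End.mul_apply, ih, map_smul, MxDx_pow, smul_smul, mul_comm, pow_succ']

lemma aeval_MxDx (f : ℂ[X]) (j : ℕ) :
    (aeval (Mx * Dx) f) (X^j : ℂ[X]) = (f.eval (j:ℂ)) • X^j := by
  induction f using Polynomial.induction_on' with
  | add p q hp hq => simp [hp, hq, add_smul]
  | monomial k a =>
    rw [aeval_monomial]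
    simp only [Module.End.mul_apply, Module.algebraMap_end_apply, MxDx_pow_pow,
      map_smul, eval_monomial]
    rw [smul_smul, mul_comm]

lemma Dx_pow (k j : ℕ) : (Dx^k) (X^j : ℂ[X]) = (j.descFactorial k : ℂ) • X^(j-k) := by
  rw [Module.End.pow_apply]
  simp [Dx, Polynomial.iterate_derivative_X_pow_eq_smul]

lemma indep (m : ℕ) (f : ℕ → ℂ[X])
    (hsum : ∑ p ∈ Finset.Icc 1 m, aeval (tt*pa) (f p) * pa^(p-1) = 0) :
    ∀ p ∈ Finset.Icc 1 m, f p = 0 := by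
  intro p₀ hp₀
  simp only [Finset.mem_Icc] at hp₀
  have key : ∀ N, m ≤ N → (f p₀).eval ((N - (p₀ - 1) : ℕ) : ℂ) = 0 := by
    intro N hN
    have h1 := congrArg rho hsum
    rw [map_sum, map_zero] at h1
    have h2 : ∀ p ∈ Finset.Icc 1 m,
        rho (aeval (tt*pa) (f p) * pa^(p-1)) = aeval (Mx*Dx) (f p) * Dx^(p-1) := by
      intro p _
      rw [map_mul, map_pow, rho_pa, ← Polynomial.aeval_algHom_apply, map_mul, rho_tt, rho_pa]
    rw [Finset.sum_congr rfl h2] at h1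
    have h3 := congrArg (fun (T : Module.End ℂ ℂ[X]) => T (X^N)) h1
    simp only [LinearMap.coe_sum, Finset.sum_apply, LinearMap.zero_apply,
      Module.End.mul_apply, Dx_pow, map_smul, aeval_MxDx] at h3
    have h4 := congrArg (fun q : ℂ[X] => q.coeff (N - (p₀ - 1))) h3
    simp only [Polynomial.finset_sum_coeff, Polynomial.coeff_smul, Polynomial.coeff_X_pow,
      smul_eq_mul, Polynomial.coeff_zero] at h4
    rw [Finset.sum_eq_single p₀] at h4
    · simp only [if_pos rfl, mul_one] at h4
      rcases mul_eq_zero.1 h4 with h | h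
      · exfalso
        have : (N.descFactorial (p₀ - 1)) ≠ 0 := by
          rw [Ne, Nat.descFactorial_eq_zero_iff_lt]
          omega
        exact this (by exact_mod_cast h)
      · simpa using h
    · intro p hp hne
      simp only [Finset.mem_Icc] at hp
      rw [if_neg (by omega), mul_zero, mul_zero]
    · intro h; exact absurd (Finset.mem_Icc.2 hp₀) h
  have : {x : ℂ | (f p₀).IsRoot x}.Infinite := by
    apply Set.infinite_of_injective_forall_mem
      (f := fun j : ℕ => ((m + j - (p₀ - 1) : ℕ) : ℂ))
    · intro a b hab
      have := Nat.cast_injective (R := ℂ) hab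
      omega
    · intro j
      exact key (m + j) (by omega)
  exact (f p₀).eq_zero_of_infinite_isRoot this

lemma comp_shift (q : ℂ[X]) (p : ℕ) (hp : 1 ≤ p) :
    (q.comp (-X - C 1)).comp (X + C ((p-1:ℕ):ℂ)) = q.comp (-X - C (p:ℂ)) := by
  rw [Polynomial.comp_assoc]
  congr 1
  have h1 : ((p-1:ℕ):ℂ) = (p:ℂ) - 1 := by
    rw [Nat.cast_sub hp]; simp
  simp [sub_comp, neg_comp, X_comp, C_comp, add_comp, h1]
  ring


/-- An operator `L = (t∂_t)^n t + Σ_{p=1}^{n+1} g_p(t∂_t) ∂_t^{p-1}` (with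
`deg g_p ≤ n-p+1`) satisfies `L^∨ = (-1)^n L` (with `∨` the anti-involution with
`t^∨ = t`, `∂_t^∨ = -∂_t`) if and only if `g_p(x) = (-1)^{n-p+1} g_p(-x-p)` for all `p`. -/
theorem stmt16 {n : ℕ} (V : Weyl → Weyl)
    (hadd : ∀ x y, V (x + y) = V x + V y)
    (hmul : ∀ x y, V (x * y) = V y * V x)
    (halg : ∀ c : ℂ, V (algebraMap ℂ Weyl c) = algebraMap ℂ Weyl c)
    (ht : V tt = tt) (hpa : V pa = -pa)
    (g : ℕ → Polynomial ℂ)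
    (hdeg : ∀ p, 1 ≤ p → p ≤ n + 1 → (g p).natDegree ≤ n + 1 - p)
    (L : Weyl)
    (hLform : L = (tt * pa) ^ n * tt +
      ∑ p ∈ Finset.Icc 1 (n + 1), Polynomial.aeval (tt * pa) (g p) * pa ^ (p - 1)) :
    V L = (-1 : Weyl) ^ n * L ↔
      ∀ p, 1 ≤ p → p ≤ n + 1 →
        g p = Polynomial.C ((-1 : ℂ) ^ (n + 1 - p)) *
          (g p).comp (-Polynomial.X - Polynomial.C (p : ℂ)) := by
  have hone : V 1 = 1 := by simpa using halg 1
  have hpow : ∀ (x : Weyl) (k : ℕ), V (x^k) = (V x)^k := by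
    intro x k
    induction k with
    | zero => simpa using hone
    | succ k ih => rw [pow_succ, hmul, ih, ← pow_succ']
  have haeval : ∀ (w : Weyl) (q : ℂ[X]), V (aeval w q) = aeval (V w) q := by
    intro w q
    induction q using Polynomial.induction_on' with
    | add p q hp hq => rw [map_add, hadd, hp, hq, map_add]
    | monomial k a =>
      rw [aeval_monomial, hmul, hpow, halg, aeval_monomial, Algebra.commutes]
  have hVh : V (tt * pa) = -(tt * pa + 1) := by
    rw [hmul, hpa, ht, neg_mul pa tt, weyl_comm]
  -- the transformed coefficient polynomials
  set G : ℕ → ℂ[X] := fun p => C ((-1 : ℂ) ^ (n + 1 - p)) * (g p).comp (-X - C (p:ℂ))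
    with hG
  have hcomm : ∀ (x : Weyl) (k : ℕ), x * (-1:Weyl)^k = (-1:Weyl)^k * x := by
    intro x k
    have h1 : ((-1:Weyl))^k = algebraMap ℂ Weyl ((-1)^k) := by
      rw [map_pow]; simp
    rw [h1, ← Algebra.commutes]
  -- leading term
  have hlead : V ((tt * pa) ^ n * tt) = (-1 : Weyl) ^ n * ((tt * pa) ^ n * tt) := by
    calc V ((tt*pa)^n * tt) = tt * (-(tt*pa+1))^n := by rw [hmul, ht, hpow, hVh]
    _ = tt * ((-1:Weyl)^n * (tt*pa+1)^n) := by rw [neg_pow (tt*pa+1) n]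
    _ = (-1:Weyl)^n * (tt * (tt*pa+1)^n) := by
        rw [← mul_assoc, hcomm tt n, mul_assoc]
    _ = (-1:Weyl)^n * ((tt*pa)^n * tt) := by rw [tt_hpow]
  -- per-term computation
  have hterm : ∀ p ∈ Finset.Icc 1 (n+1),
      V (aeval (tt*pa) (g p) * pa^(p-1)) = (-1:Weyl)^n * (aeval (tt*pa) (G p) * pa^(p-1)) := by
    intro p hp
    obtain ⟨hp1, hp2⟩ := Finset.mem_Icc.1 hp
    have hpt : (aeval (tt*pa)) (-X - C (1:ℂ)) = -(tt*pa+1) := by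
      simp only [map_sub, map_neg, aeval_X, aeval_C, map_one]
      abel
    have e1 : aeval (tt*pa) ((g p).comp (-X - C (1:ℂ))) = aeval (-(tt*pa+1)) (g p) := by
      rw [aeval_comp, hpt]
    have e2 : aeval (tt*pa) (G p)
        = algebraMap ℂ Weyl ((-1:ℂ)^(n+1-p)) * aeval (tt*pa) ((g p).comp (-X - C (p:ℂ))) := by
      rw [hG]
      simp [map_mul, aeval_C]
    have e3 : (-1:Weyl)^n * algebraMap ℂ Weyl ((-1:ℂ)^(n+1-p)) = (-1:Weyl)^(p-1) := by
      have h1 : algebraMap ℂ Weyl ((-1:ℂ)^(n+1-p)) = (-1:Weyl)^(n+1-p) := by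
        rw [map_pow]; simp
      rw [h1, ← pow_add]
      have hnp : n + (n+1-p) = (p-1) + 2*(n+1-p) := by omega
      rw [hnp, pow_add, pow_mul]
      norm_num
    calc V (aeval (tt*pa) (g p) * pa^(p-1))
        = V (pa^(p-1)) * V (aeval (tt*pa) (g p)) := hmul _ _
      _ = (-pa)^(p-1) * aeval (-(tt*pa+1)) (g p) := by rw [hpow, hpa, haeval, hVh]
      _ = (-1:Weyl)^(p-1) * (pa^(p-1) * aeval (tt*pa) ((g p).comp (-X - C (1:ℂ)))) := by
          rw [neg_pow pa (p-1), e1, mul_assoc]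
      _ = (-1:Weyl)^(p-1) *
          (aeval (tt*pa) (((g p).comp (-X - C (1:ℂ))).comp (X + C ((p-1:ℕ):ℂ))) * pa^(p-1)) := by
          rw [papow_aeval]
      _ = (-1:Weyl)^(p-1) * (aeval (tt*pa) ((g p).comp (-X - C (p:ℂ))) * pa^(p-1)) := by
          rw [comp_shift _ p hp1]
      _ = (-1:Weyl)^n * (aeval (tt*pa) (G p) * pa^(p-1)) := by
          conv_rhs => rw [e2, ← mul_assoc, ← mul_assoc, e3, mul_assoc]
  -- V of a finite sum
  have hzero : V 0 = 0 := by
    have := hadd 0 0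
    simp only [add_zero] at this
    exact (left_eq_add.mp this)
  have hVsum : ∀ (s : Finset ℕ) (F : ℕ → Weyl), V (∑ p ∈ s, F p) = ∑ p ∈ s, V (F p) := by
    intro s F
    induction s using Finset.cons_induction with
    | empty => simpa using hzero
    | cons a s ha ih => rw [Finset.sum_cons, hadd, ih, Finset.sum_cons]
  -- the full computation of V L
  have hVL : V L = (-1:Weyl)^n *
      ((tt*pa)^n * tt + ∑ p ∈ Finset.Icc 1 (n+1), aeval (tt*pa) (G p) * pa^(p-1)) := by
    rw [hLform, hadd, hlead, hVsum, Finset.sum_congr rfl hterm, mul_add, Finset.mul_sum]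
  -- cancellation of the unit (-1)^n
  have hcanc : ∀ a b : Weyl, ((-1:Weyl)^n * a = (-1:Weyl)^n * b) ↔ a = b := by
    intro a b
    constructor
    · intro hab
      have h2 := congrArg (fun z => (-1:Weyl)^n * z) hab
      have h3 : (-1:Weyl)^n * ((-1:Weyl)^n) = 1 := by
        rw [← pow_add, show n + n = 2*n by ring, pow_mul]
        norm_num
      simpa only [← mul_assoc, h3, one_mul] using h2
    · intro hab; rw [hab]
  rw [hVL]
  conv_lhs => rw [hLform]
  rw [hcanc]
  constructor
  · intro hE p hp1 hp2
    have hsums := add_left_cancel hE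
    have hdiff : ∑ p ∈ Finset.Icc 1 (n+1), aeval (tt*pa) (G p - g p) * pa^(p-1) = 0 := by
      simp only [map_sub, sub_mul, Finset.sum_sub_distrib, hsums, sub_self]
    have h0 := indep (n+1) (fun p => G p - g p) hdiff p (Finset.mem_Icc.2 ⟨hp1, hp2⟩)
    have hgG : g p = G p := (sub_eq_zero.mp (by simpa using h0)).symm
    conv_lhs => rw [hgG]
  · intro hg
    congr 1
    apply Finset.sum_congr rfl
    intro p hp
    obtain ⟨hp1, hp2⟩ := Finset.mem_Icc.1 hp
    rw [show G p = g p from by rw [hG]; exact (hg p hp1 hp2).symm]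
end
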